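/- For ε ∈ [0,1], let w(ε) = 2ε(2+ε)/(3+2ε), let Δ_ε be the triangle with vertices (0,0), (2+ε,0), (0,w(ε)), and let A be the trapeze with vertices (0,0), (1,0), (1,4/5), (0,6/5). Then the Lebesgue measure of A ∩ Δ_ε equals ε, i.e. Leb²(A ∩ Δ_ε) = length([2, 2+ε]) for every ε ∈ [0,1]. -/

import Mathlib

open MeasureTheory Set

/-- The trapeze with vertices `(0,0)`, `(1,0)`, `(1,4/5)`, `(0,6/5)`. -/
def trapezeA : Set (ℝ × ℝ) :=
  {p | 0 ≤ p.1 ∧ p.1 ≤ 1 ∧ 0 ≤ p.2 ∧ p.2 ≤ 6 / 5 - (2 / 5) * p.1}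

/-- `w(ε) = 2ε(2+ε)/(3+2ε)`. -/
noncomputable def wfun (ε : ℝ) : ℝ := 2 * ε * (2 + ε) / (3 + 2 * ε)

/-- The triangle with vertices `(0,0)`, `(2+ε,0)`, `(0,w(ε))`, written as
`{(x,y) : x ≥ 0, y ≥ 0, w(ε)·x + (2+ε)·y ≤ (2+ε)·w(ε)}`. -/
noncomputable def triangleΔ (ε : ℝ) : Set (ℝ × ℝ) :=
  {p | 0 ≤ p.1 ∧ 0 ≤ p.2 ∧ wfun ε * p.1 + (2 + ε) * p.2 ≤ (2 + ε) * wfun ε}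

/-- Mass balance: the Lebesgue measure of `A ∩ Δ_ε` equals `ε`, i.e. the length of
`[2, 2+ε]`, for every `ε ∈ [0,1]`. -/
theorem area_inter_triangle (ε : ℝ) (hε : ε ∈ Icc (0 : ℝ) 1) :
    volume (trapezeA ∩ triangleΔ ε) = ENNReal.ofReal ε := by
  obtain ⟨hε0, hε1⟩ := hε
  have h2 : (0:ℝ) < 2 + ε := by linarith
  have h3 : (0:ℝ) < 3 + 2*ε := by linarith
  set w : ℝ := wfun ε with hwdef
  have hweq : w * (3 + 2*ε) = 2 * ε * (2 + ε) := by
    rw [hwdef, wfun]; field_simp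
  have hw0 : 0 ≤ w := by
    rw [hwdef, wfun]; positivity
  set f : ℝ → ℝ := fun x => w - w/(2+ε) * x with hf
  have hfnn : ∀ x ∈ Icc (0:ℝ) 1, 0 ≤ f x := by
    intro x hx
    simp only [hf]
    rw [div_mul_eq_mul_div, sub_nonneg, div_le_iff₀ h2]
    nlinarith [hx.1, hx.2]
  have hset : trapezeA ∩ triangleΔ ε =
      {p : ℝ×ℝ | p.1 ∈ Icc (0:ℝ) 1 ∧ p.2 ∈ Icc 0 (f p.1)} := by
    ext ⟨x, y⟩
    simp only [trapezeA, triangleΔ, mem_inter_iff, mem_setOf_eq, mem_Icc, hf, ← hwdef]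
    constructor
    · rintro ⟨⟨h1, hx1, hy0, -⟩, -, -, h5⟩
      refine ⟨⟨h1, hx1⟩, hy0, ?_⟩
      rw [div_mul_eq_mul_div, sub_div' h2.ne', le_div_iff₀ h2]
      nlinarith
    · rintro ⟨⟨h1, hx1⟩, hy0, h4⟩
      rw [div_mul_eq_mul_div, sub_div' h2.ne', le_div_iff₀ h2] at h4
      have h4' : y * (3 + 2*ε) ≤ 2*ε*(2+ε) - 2*ε*x := by
        nlinarith [mul_le_mul_of_nonneg_right h4 h3.le, hweq, mul_le_mul_of_nonneg_left hweq.le h1, mul_le_mul_of_nonneg_left hweq.ge h1]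
      have hy2 : y ≤ 6 / 5 - 2 / 5 * x := by
        nlinarith [h4', mul_nonneg (sub_nonneg.2 hε1) (by nlinarith : (0:ℝ) ≤ 5*ε + 9 - 3*x)]
      exact ⟨⟨h1, hx1, hy0, hy2⟩, h1, hy0, by nlinarith⟩
  have hfc : Continuous f := by continuity
  have hm : MeasurableSet {p : ℝ×ℝ | p.1 ∈ Icc (0:ℝ) 1 ∧ p.2 ∈ Icc 0 (f p.1)} := by
    apply IsClosed.measurableSet
    have : {p : ℝ×ℝ | p.1 ∈ Icc (0:ℝ) 1 ∧ p.2 ∈ Icc 0 (f p.1)} =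
        (Prod.fst ⁻¹' Icc 0 1) ∩ {p : ℝ×ℝ | 0 ≤ p.2} ∩ {p : ℝ×ℝ | p.2 ≤ f p.1} := by
      ext ⟨x, y⟩; simp [mem_Icc, and_assoc]
    rw [this]
    exact (((isClosed_Icc).preimage continuous_fst).inter
      (isClosed_le continuous_const continuous_snd)).inter
      (isClosed_le continuous_snd (hfc.comp continuous_fst))
  rw [hset]
  rw [Measure.volume_eq_prod, Measure.prod_apply hm]
  have hslice : ∀ x : ℝ, volume (Prod.mk x ⁻¹' {p : ℝ×ℝ | p.1 ∈ Icc (0:ℝ) 1 ∧ p.2 ∈ Icc 0 (f p.1)})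
      = (Icc (0:ℝ) 1).indicator (fun x => ENNReal.ofReal (f x)) x := by
    intro x
    by_cases hx : x ∈ Icc (0:ℝ) 1
    · have : Prod.mk x ⁻¹' {p : ℝ×ℝ | p.1 ∈ Icc (0:ℝ) 1 ∧ p.2 ∈ Icc 0 (f p.1)} = Icc 0 (f x) := by
        ext y; exact ⟨fun h => h.2, fun h => ⟨hx, h⟩⟩
      rw [this, Real.volume_Icc, indicator_of_mem hx, sub_zero]
    · have : Prod.mk x ⁻¹' {p : ℝ×ℝ | p.1 ∈ Icc (0:ℝ) 1 ∧ p.2 ∈ Icc 0 (f p.1)} = ∅ :=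
        eq_empty_of_forall_notMem fun y hy => hx hy.1
      rw [this, measure_empty, indicator_of_notMem hx]
  simp_rw [hslice]
  rw [lintegral_indicator measurableSet_Icc]
  rw [← ofReal_integral_eq_lintegral_ofReal hfc.integrableOn_Icc
    ((ae_restrict_iff' measurableSet_Icc).2 (Filter.Eventually.of_forall hfnn))]
  congr 1
  rw [integral_Icc_eq_integral_Ioc, ← intervalIntegral.integral_of_le (by norm_num : (0:ℝ) ≤ 1)]
  have : ∫ x in (0:ℝ)..1, f x = w - w/(2+ε) * (1/2) := by
    simp only [hf]
    rw [intervalIntegral.integral_sub intervalIntegrable_const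
      (by apply IntervalIntegrable.const_mul; exact intervalIntegral.intervalIntegrable_id)]
    rw [intervalIntegral.integral_const_mul, integral_id]
    norm_num
  rw [this]
  field_simp
  nlinarith [hweq]
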